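/- Let Λ̂₁ := U³ ⊕ E8(−2) ⊕ (−2) ⊕ (−2), and let L₀ := f, where e, f is the standard basis of the first copy of U. Let x be any primitive element of the sublattice E8(−2) ⊕ (−2) ⊕ (−2) of Λ̂₁ (i.e. with zero U³-component). Then 2L₀ + x is primitive in Λ̂₁ and there exists an isometry φ ∈ O(Λ̂₁) with φ(2L₀ + x) = x. -/

import Mathlib

open Matrix

section Prelude

variable {ι : Type*} [Fintype ι] [DecidableEq ι]

/-- The bilinear form associated to a Gram matrix `G`. -/
def bf (G : Matrix ι ι ℤ) (x y : ι → ℤ) : ℤ := x ⬝ᵥ G.mulVec y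

/-- `φ` is an isometry of the lattice `(ι → ℤ, bf G)`. -/
def IsIsometry (G : Matrix ι ι ℤ) (φ : (ι → ℤ) ≃ₗ[ℤ] (ι → ℤ)) : Prop :=
  ∀ x y, bf G (φ x) (φ y) = bf G x y

/-- `x` is a primitive lattice vector. -/
def IsPrimitive (x : ι → ℤ) : Prop :=
  x ≠ 0 ∧ ∀ (k : ℤ) (y : ι → ℤ), x = k • y → IsUnit k

/-- `d` is the divisibility of `x`: the positive generator of the ideal `(x, L) ⊆ ℤ`. -/
def HasDiv (G : Matrix ι ι ℤ) (x : ι → ℤ) (d : ℤ) : Prop :=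
  0 < d ∧ (∀ y, d ∣ bf G x y) ∧ ∀ s : ℤ, (∀ y, s ∣ bf G x y) → s ∣ d

/-- The Gram matrix of the hyperbolic plane `U`. -/
def gramU : Matrix (Fin 2) (Fin 2) ℤ := !![0, 1; 1, 0]

/-- The Gram matrix of `E₈(-1)`: the negative of the `E₈` Cartan matrix. -/
def gramE8 : Matrix (Fin 8) (Fin 8) ℤ := - CartanMatrix.E₈

/-- The Gram matrix of `U³`. -/
def gramU3 : Matrix (Fin 2 × Fin 3) (Fin 2 × Fin 3) ℤ :=
  Matrix.blockDiagonal fun _ => gramU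

/-- The Gram matrix of `U(2)³`. -/
def gramU2_3 : Matrix (Fin 2 × Fin 3) (Fin 2 × Fin 3) ℤ :=
  Matrix.blockDiagonal fun _ => (2 : ℤ) • gramU

/-- The subgroup of isometries of the lattice with Gram matrix `G`. -/
def isomGroup (G : Matrix ι ι ℤ) : Subgroup ((ι → ℤ) ≃ₗ[ℤ] (ι → ℤ)) where
  carrier := {φ | IsIsometry G φ}
  one_mem' := fun _ _ => rfl
  mul_mem' := by
    intro a b ha hb x y
    show bf G (a (b x)) (a (b y)) = bf G x y
    rw [ha, hb]
  inv_mem' := by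
    intro a ha x y
    have h := ha (a.symm x) (a.symm y)
    simp only [LinearEquiv.apply_symm_apply] at h
    exact h.symm

/-- Two nonzero lattice vectors span the same ray iff positive multiples agree. -/
def raySetoid (ι : Type*) : Setoid {x : ι → ℤ // x ≠ 0} where
  r x y := ∃ a b : ℤ, 0 < a ∧ 0 < b ∧ a • x.1 = b • y.1
  iseqv := by
    constructor
    · exact fun x => ⟨1, 1, one_pos, one_pos, rfl⟩
    · rintro x y ⟨a, b, ha, hb, h⟩
      exact ⟨b, a, hb, ha, h.symm⟩
    · rintro x y z ⟨a, b, ha, hb, h⟩ ⟨c, d, hc, hd, h'⟩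
      refine ⟨c * a, b * d, mul_pos hc ha, mul_pos hb hd, ?_⟩
      calc (c * a) • x.1 = c • a • x.1 := (smul_smul c a x.1).symm
        _ = c • b • y.1 := by rw [h]
        _ = b • c • y.1 := smul_comm c b y.1
        _ = b • d • z.1 := by rw [h']
        _ = (b * d) • z.1 := smul_smul b d z.1

/-- The set of rays (half-lines spanned by nonzero lattice vectors). -/
def Ray (ι : Type*) := Quotient (raySetoid ι)

/-- The ray spanned by a nonzero lattice vector. -/
def rayMk (x : ι → ℤ) (hx : x ≠ 0) : Ray ι := Quotient.mk (raySetoid ι) ⟨x, hx⟩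

/-- The action of a linear automorphism on rays. -/
def rayMap (φ : (ι → ℤ) ≃ₗ[ℤ] (ι → ℤ)) : Ray ι → Ray ι :=
  Quotient.map (fun p => ⟨φ p.1, fun h => p.2 (by simpa using φ.map_eq_zero_iff.mp h)⟩)
    (by
      rintro x y ⟨a, b, ha, hb, h⟩
      refine ⟨a, b, ha, hb, ?_⟩
      show a • φ x.1 = b • φ y.1
      rw [← _root_.map_smul, ← _root_.map_smul, h])

end Prelude

/-- The index type of `Λ̂₁ = U³ ⊕ E₈(-2) ⊕ (-2) ⊕ (-2)`. -/
abbrev K16 := (Fin 2 × Fin 3) ⊕ (Fin 8 ⊕ (Fin 1 ⊕ Fin 1))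

/-- The Gram matrix of `Λ̂₁ = U³ ⊕ E₈(-2) ⊕ (-2) ⊕ (-2)`. -/
def gram1 : Matrix K16 K16 ℤ :=
  Matrix.fromBlocks gramU3 0 0
    (Matrix.fromBlocks ((2 : ℤ) • gramE8) 0 0 (Matrix.fromBlocks !![-2] 0 0 !![-2]))

/-- The element `L₀ = f`, where `e, f` is the standard basis of the first copy of `U`. -/
def L0 : K16 → ℤ :=
  Sum.elim (fun p => if p = ((1 : Fin 2), (0 : Fin 3)) then 1 else 0) 0


section MyAux

open Matrix

abbrev R10 := Fin 8 ⊕ (Fin 1 ⊕ Fin 1)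

/-- Gram matrix of `E₈(-1) ⊕ (-1) ⊕ (-1)` (unimodular). -/
def gnN : Matrix R10 R10 ℤ :=
  Matrix.fromBlocks gramE8 0 0 (Matrix.fromBlocks !![-1] 0 0 !![-1])

def b8 : Matrix (Fin 8) (Fin 8) ℤ :=
  !![-4, -5, -7, -10, -8, -6, -4, -2;
     -5, -8, -10, -15, -12, -9, -6, -3;
     -7, -10, -14, -20, -16, -12, -8, -4;
     -10, -15, -20, -30, -24, -18, -12, -6;
     -8, -12, -16, -24, -20, -15, -10, -5;
     -6, -9, -12, -18, -15, -12, -8, -4;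
     -4, -6, -8, -12, -10, -8, -6, -3;
     -2, -3, -4, -6, -5, -4, -3, -2]

def bN : Matrix R10 R10 ℤ := Matrix.fromBlocks b8 0 0 (Matrix.fromBlocks !![-1] 0 0 !![-1])

lemma gnN_mul_bN : gnN * bN = 1 := by decide

lemma gram1_symm : gram1ᵀ = gram1 := by decide

lemma gram1_rr : ∀ j j' : R10, gram1 (Sum.inr j) (Sum.inr j') = 2 * gnN j j' := by decide

lemma gram1_rl : ∀ (j : R10) (u : Fin 2 × Fin 3), gram1 (Sum.inr j) (Sum.inl u) = 0 := by decide

section BL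

variable {ι : Type*} [Fintype ι] [DecidableEq ι] (G : Matrix ι ι ℤ)

lemma bf_add_left (u v w : ι → ℤ) : bf G (u + v) w = bf G u w + bf G v w := by
  simp [bf, add_dotProduct]

lemma bf_sub_left (u v w : ι → ℤ) : bf G (u - v) w = bf G u w - bf G v w := by
  simp [bf, sub_dotProduct]

lemma bf_smul_left (c : ℤ) (u w : ι → ℤ) : bf G (c • u) w = c * bf G u w := by
  simp only [bf, smul_dotProduct, smul_eq_mul]

lemma bf_add_right (u v w : ι → ℤ) : bf G u (v + w) = bf G u v + bf G u w := by
  simp [bf, Matrix.mulVec_add, dotProduct_add]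

lemma bf_sub_right (u v w : ι → ℤ) : bf G u (v - w) = bf G u v - bf G u w := by
  simp [bf, Matrix.mulVec_sub, dotProduct_sub]

lemma bf_smul_right (c : ℤ) (u w : ι → ℤ) : bf G u (c • w) = c * bf G u w := by
  simp only [bf, Matrix.mulVec_smul, dotProduct_smul, smul_eq_mul]

/-- `v ↦ bf G v w` as a linear map. -/
def bfl (w : ι → ℤ) : (ι → ℤ) →ₗ[ℤ] ℤ where
  toFun v := bf G v w
  map_add' u v := bf_add_left G u v w
  map_smul' c v := by simpa using bf_smul_left G c v w

@[simp] lemma bfl_apply (w v : ι → ℤ) : bfl G w v = bf G v w := rfl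

end BL

lemma bf_comm (u v : K16 → ℤ) : bf gram1 u v = bf gram1 v u := by
  rw [bf, bf, Matrix.dotProduct_mulVec, ← Matrix.mulVec_transpose, gram1_symm, dotProduct_comm]

lemma bf_right (v w : K16 → ℤ) (hv : ∀ u, v (Sum.inl u) = 0) :
    bf gram1 v w = 2 * ((v ∘ Sum.inr) ⬝ᵥ gnN.mulVec (w ∘ Sum.inr)) := by
  have h1 : ∀ j : R10, gram1.mulVec w (Sum.inr j) = 2 * (gnN.mulVec (w ∘ Sum.inr)) j := by
    intro j
    rw [Matrix.mulVec, dotProduct, Fintype.sum_sum_type]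
    simp only [gram1_rl, zero_mul, Finset.sum_const_zero, zero_add, gram1_rr]
    rw [Matrix.mulVec, dotProduct, Finset.mul_sum]
    exact Finset.sum_congr rfl fun j' _ => by simp [Function.comp]; ring
  rw [bf, dotProduct, Fintype.sum_sum_type]
  simp only [hv, zero_mul, Finset.sum_const_zero, zero_add, h1]
  rw [dotProduct, Finset.mul_sum]
  exact Finset.sum_congr rfl fun j _ => by simp [Function.comp]; ring

lemma bf_L0_L0 : bf gram1 L0 L0 = 0 := by decide

lemma L0_inr : (L0 ∘ Sum.inr) = 0 := rfl

lemma exists_bezout (x : K16 → ℤ) (hxU : ∀ u : Fin 2 × Fin 3, x (Sum.inl u) = 0)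
    (hxprim : IsPrimitive x) : ∃ c : R10 → ℤ, ∑ j, c j * x (Sum.inr j) = 1 := by
  set xR : R10 → ℤ := fun j => x (Sum.inr j) with hxR
  obtain ⟨d, hd⟩ := (IsPrincipalIdealRing.principal (Ideal.span (Set.range xR))).principal
  have hdvd : ∀ j, d ∣ xR j := by
    intro j
    have h : xR j ∈ Ideal.span (Set.range xR) := Ideal.subset_span ⟨j, rfl⟩
    rw [hd] at h
    exact Ideal.mem_span_singleton.mp h
  have hxy : x = d • (Sum.elim (0 : Fin 2 × Fin 3 → ℤ) fun j => xR j / d) := by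
    funext i
    cases i with
    | inl u => simp [hxU u]
    | inr j => simp [Int.mul_ediv_cancel' (hdvd j)]; rfl
  have hu : IsUnit d := hxprim.2 d _ hxy
  have htop : Ideal.span (Set.range xR) = ⊤ := by
    rw [hd]; exact Ideal.span_singleton_eq_top.mpr hu
  have hmem : (1 : ℤ) ∈ Submodule.span ℤ (Set.range xR) := by
    rw [show Submodule.span ℤ (Set.range xR) = Ideal.span (Set.range xR) from rfl, htop]
    exact Submodule.mem_top
  obtain ⟨c, hc⟩ := (Submodule.mem_span_range_iff_exists_fun ℤ).mp hmem
  exact ⟨c, by simpa [smul_eq_mul] using hc⟩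

end MyAux

/-- Let `x` be a primitive element of the sublattice `E₈(-2) ⊕ (-2) ⊕ (-2)` of `Λ̂₁` (i.e. with
zero `U³`-component).  Then `2L₀ + x` is primitive in `Λ̂₁` and lies in the same
`O(Λ̂₁)`-orbit as `x`. -/
theorem two_L0_plus_x_in_orbit_of_x (x : K16 → ℤ)
    (hxU : ∀ u : Fin 2 × Fin 3, x (Sum.inl u) = 0) (hxprim : IsPrimitive x) :
    _root_.IsPrimitive (2 • L0 + x) ∧
    ∃ φ : (K16 → ℤ) ≃ₗ[ℤ] (K16 → ℤ), IsIsometry gram1 φ ∧ φ (2 • L0 + x) = x := by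
  constructor
  · constructor
    · intro h
      have h0 := congrFun h (Sum.inl (1, 0))
      simp [L0, hxU] at h0
    · intro k y hky
      have hky' : ∀ i, 2 • L0 i + x i = k * y i := by
        intro i
        have := congrFun hky i
        simpa using this
      refine hxprim.2 k (Sum.elim
        (fun u => if u = ((1 : Fin 2), (0 : Fin 3)) then 0 else y (Sum.inl u))
        (fun j => y (Sum.inr j))) ?_
      funext i
      cases i with
      | inl u =>
        by_cases hu : u = ((1 : Fin 2), (0 : Fin 3))
        · simp [hu, hxU]
        · have h := hky' (Sum.inl u)
          simp only [L0, Sum.elim_inl, hu, if_false, smul_zero, zero_add, hxU u] at h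
          simpa [hu, hxU u] using h
      | inr j =>
        have h := hky' (Sum.inr j)
        simpa [L0] using h
  · obtain ⟨c, hc⟩ := exists_bezout x hxU hxprim
    set aR : R10 → ℤ := bN.mulVec c with haRdef
    set a : K16 → ℤ := Sum.elim 0 aR with hadef
    have haU : ∀ u : Fin 2 × Fin 3, a (Sum.inl u) = 0 := fun u => rfl
    have haR : (a ∘ Sum.inr) = aR := rfl
    set m : ℤ := aR ⬝ᵥ gnN.mulVec aR with hm
    have hxa : bf gram1 x a = 2 := by
      rw [bf_right x a hxU, haR, haRdef, Matrix.mulVec_mulVec, gnN_mul_bN, Matrix.one_mulVec,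
        dotProduct_comm]
      rw [show c ⬝ᵥ (x ∘ Sum.inr) = 1 from hc]
      norm_num
    have hax : bf gram1 a x = 2 := by rw [bf_comm]; exact hxa
    have haa : bf gram1 a a = 2 * m := by rw [bf_right a a haU, haR]
    have haf : bf gram1 a L0 = 0 := by
      rw [bf_right a L0 haU, L0_inr, Matrix.mulVec_zero, dotProduct_zero, mul_zero]
    have hfa : bf gram1 L0 a = 0 := by rw [bf_comm]; exact haf
    have hxf : bf gram1 x L0 = 0 := by
      rw [bf_right x L0 hxU, L0_inr, Matrix.mulVec_zero, dotProduct_zero, mul_zero]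
    have hfx : bf gram1 L0 x = 0 := by rw [bf_comm]; exact hxf
    have hff : bf gram1 L0 L0 = 0 := bf_L0_L0
    set T : (K16 → ℤ) →ₗ[ℤ] (K16 → ℤ) :=
      LinearMap.id + (bfl gram1 L0).smulRight a
        - ((bfl gram1 a) + m • (bfl gram1 L0)).smulRight L0 with hTdef
    set Ti : (K16 → ℤ) →ₗ[ℤ] (K16 → ℤ) :=
      LinearMap.id - (bfl gram1 L0).smulRight a
        + ((bfl gram1 a) - m • (bfl gram1 L0)).smulRight L0 with hTidef
    have hT : ∀ v, T v = v + (bf gram1 v L0) • a - (bf gram1 v a + m * bf gram1 v L0) • L0 := by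
      intro v
      simp only [hTdef, LinearMap.sub_apply, LinearMap.add_apply, LinearMap.id_apply,
        LinearMap.smulRight_apply, LinearMap.smul_apply, bfl_apply, smul_eq_mul]
    have hTi : ∀ v, Ti v = v - (bf gram1 v L0) • a + (bf gram1 v a - m * bf gram1 v L0) • L0 := by
      intro v
      simp only [hTidef, LinearMap.sub_apply, LinearMap.add_apply, LinearMap.id_apply,
        LinearMap.smulRight_apply, LinearMap.smul_apply, bfl_apply, smul_eq_mul]
    have hbfT : ∀ v w, bf gram1 (T v) w
        = bf gram1 v w + bf gram1 v L0 * bf gram1 a w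
          - (bf gram1 v a + m * bf gram1 v L0) * bf gram1 L0 w := by
      intro v w
      rw [hT v, bf_sub_left, bf_add_left, bf_smul_left, bf_smul_left]
    have hbfTi : ∀ v w, bf gram1 (Ti v) w
        = bf gram1 v w - bf gram1 v L0 * bf gram1 a w
          + (bf gram1 v a - m * bf gram1 v L0) * bf gram1 L0 w := by
      intro v w
      rw [hTi v, bf_add_left, bf_sub_left, bf_smul_left, bf_smul_left]
    have hbfTr : ∀ v w, bf gram1 w (T v)
        = bf gram1 w v + bf gram1 v L0 * bf gram1 w a
          - (bf gram1 v a + m * bf gram1 v L0) * bf gram1 w L0 := by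
      intro v w
      rw [hT v, bf_sub_right, bf_add_right, bf_smul_right, bf_smul_right]
    have hTif : ∀ v, Ti (T v) = v := by
      intro v
      have e1 : bf gram1 (T v) L0 = bf gram1 v L0 := by rw [hbfT, haf, hff]; ring
      have e2 : bf gram1 (T v) a = bf gram1 v a + 2 * m * bf gram1 v L0 := by
        rw [hbfT, haa, hfa]; ring
      rw [hTi (T v), e1, e2, hT v]
      module
    have hTfi : ∀ v, T (Ti v) = v := by
      intro v
      have e1 : bf gram1 (Ti v) L0 = bf gram1 v L0 := by rw [hbfTi, haf, hff]; ring
      have e2 : bf gram1 (Ti v) a = bf gram1 v a - 2 * m * bf gram1 v L0 := by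
        rw [hbfTi, haa, hfa]; ring
      rw [hT (Ti v), e1, e2, hTi v]
      module
    refine ⟨LinearEquiv.ofLinear T Ti (LinearMap.ext hTfi) (LinearMap.ext hTif), ?_, ?_⟩
    · intro u v
      show bf gram1 (T u) (T v) = bf gram1 u v
      rw [hbfT u (T v), hbfTr v u, hbfTr v a, hbfTr v L0, haa, haf, hfa, hff,
        bf_comm a v, bf_comm L0 v]
      ring
    · show T (2 • L0 + x) = x
      have h2 : (2 • L0 : K16 → ℤ) = (2 : ℤ) • L0 := by
        funext i; simp
      have s1 : bf gram1 (2 • L0 + x) L0 = 0 := by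
        rw [h2, bf_add_left, bf_smul_left, hff, hxf]; ring
      have s2 : bf gram1 (2 • L0 + x) a = 2 := by
        rw [h2, bf_add_left, bf_smul_left, hfa, hxa]; ring
      rw [hT, s1, s2, h2]
      module
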